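/- arXiv:0712.3688 — 2 statements merged into one kernel-verified Lean document; each statement's English description precedes it below -/
import Mathlib

section
/- The Gromov–Hausdorff–Prokhorov distance separates points: if (X,d,μ) and (X',d',μ') are nonempty compact metric spaces equipped with Borel probability measures and d_GHP((X,d,μ),(X',d',μ')) = 0, then there exists a bijective isometry h : X → X' such that the pushforward of μ under h equals μ'. -/
open MeasureTheory Set

section GHP

variable {X Y : Type*}

/-- A "glue metric": a metric on the disjoint union `X ⊕ Y` whose restrictions to `X`
and `Y` coincide with the given metrics. -/
structure IsGlueMetric [MetricSpace X] [MetricSpace Y] (δ : X ⊕ Y → X ⊕ Y → ℝ) : Prop where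
  refl : ∀ a, δ a a = 0
  pos : ∀ a b, a ≠ b → 0 < δ a b
  symm : ∀ a b, δ a b = δ b a
  triangle : ∀ a b c, δ a c ≤ δ a b + δ b c
  restr_left : ∀ x x' : X, δ (Sum.inl x) (Sum.inl x') = dist x x'
  restr_right : ∀ y y' : Y, δ (Sum.inr y) (Sum.inr y') = dist y y'

/-- The Hausdorff distance, in `(X ⊕ Y, δ)`, between (the images of) `X` and `Y`:
the infimum of `ε > 0` such that each space is contained in the open `ε`-neighborhood
of the other. -/
noncomputable def glueHausdorffDist (δ : X ⊕ Y → X ⊕ Y → ℝ) : ℝ :=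
  sInf {ε : ℝ | 0 < ε ∧ (∀ x : X, ∃ y : Y, δ (Sum.inl x) (Sum.inr y) < ε) ∧
    (∀ y : Y, ∃ x : X, δ (Sum.inl x) (Sum.inr y) < ε)}

/-- The Prokhorov distance, in `(X ⊕ Y, δ)`, between the pushforwards of `μ` and `ν`:
the infimum of `ε > 0` such that `μ(C) ≤ ν(C^ε) + ε` for every `δ`-closed set `C`,
where `C^ε` is the open `ε`-neighborhood for `δ`. -/
noncomputable def glueProkhorovDist [MeasurableSpace X] [MeasurableSpace Y]
    (δ : X ⊕ Y → X ⊕ Y → ℝ) (μ : Measure X) (ν : Measure Y) : ℝ :=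
  sInf {ε : ℝ | 0 < ε ∧ ∀ C : Set (X ⊕ Y),
    (∀ a ∉ C, ∃ η > 0, ∀ b ∈ C, η ≤ δ a b) →
    μ (Sum.inl ⁻¹' C) ≤ ν (Sum.inr ⁻¹' {a | ∃ b ∈ C, δ a b < ε}) + ENNReal.ofReal ε}

/-- The Gromov–Hausdorff–Prokhorov distance between two metric spaces equipped with
Borel measures: the infimum, over all metrics `δ` on the disjoint union restricting to
the given metrics, of the maximum of the Hausdorff distance between the two spaces and
the Prokhorov distance between the pushforward measures. -/
noncomputable def ghpDist [MetricSpace X] [MetricSpace Y]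
    [MeasurableSpace X] [MeasurableSpace Y] (μ : Measure X) (ν : Measure Y) : ℝ :=
  sInf {r : ℝ | ∃ δ : X ⊕ Y → X ⊕ Y → ℝ, IsGlueMetric δ ∧
    r = max (glueHausdorffDist δ) (glueProkhorovDist δ μ ν)}

end GHP

section Aux
variable {X Y : Type*} [MetricSpace X] [MetricSpace Y]

lemma IsGlueMetric.nonneg {δ : X ⊕ Y → X ⊕ Y → ℝ} (hδ : IsGlueMetric δ) (a b : X ⊕ Y) :
    0 ≤ δ a b := by
  have h1 := hδ.triangle a b a
  rw [hδ.refl a] at h1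
  have h2 := hδ.symm a b
  linarith

lemma IsGlueMetric.abs_sub {δ : X ⊕ Y → X ⊕ Y → ℝ} (hδ : IsGlueMetric δ) (a b c : X ⊕ Y) :
    |δ a b - δ a c| ≤ δ b c := by
  rw [abs_sub_le_iff]
  constructor
  · have := hδ.triangle a c b; have := hδ.symm c b; linarith
  · have := hδ.triangle a b c; linarith

lemma IsGlueMetric.continuous_left {δ : X ⊕ Y → X ⊕ Y → ℝ} (hδ : IsGlueMetric δ)
    (s : X ⊕ Y) : Continuous fun x : X => δ s (Sum.inl x) := by
  have : LipschitzWith 1 fun x : X => δ s (Sum.inl x) := by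
    apply LipschitzWith.of_dist_le_mul
    intro a b
    simp only [NNReal.coe_one, one_mul, Real.dist_eq]
    calc |δ s (Sum.inl a) - δ s (Sum.inl b)| ≤ δ (Sum.inl a) (Sum.inl b) := hδ.abs_sub _ _ _
      _ = dist a b := hδ.restr_left a b
  exact this.continuous

noncomputable def glueδ (x₀ : X) (y₀ : Y) : X ⊕ Y → X ⊕ Y → ℝ
  | .inl x, .inl x' => dist x x'
  | .inl x, .inr y => dist x x₀ + 1 + dist y₀ y
  | .inr y, .inl x => dist x x₀ + 1 + dist y₀ y
  | .inr y, .inr y' => dist y y'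

lemma isGlueMetric_glueδ (x₀ : X) (y₀ : Y) : IsGlueMetric (glueδ x₀ y₀) := by
  constructor
  · rintro (x | y) <;> simp [glueδ]
  · rintro (x | y) (x' | y') h <;> simp only [glueδ]
    · exact dist_pos.2 (fun hh => h (by rw [hh]))
    · positivity
    · positivity
    · exact dist_pos.2 (fun hh => h (by rw [hh]))
  · rintro (x | y) (x' | y') <;> simp only [glueδ] <;> rw [dist_comm]
  · rintro (x | y) (x' | y') (x'' | y'') <;> simp only [glueδ]
    · exact dist_triangle _ _ _
    · linarith [dist_triangle x x' x₀]
    · linarith [dist_triangle x x₀ x'', dist_comm x₀ x'', dist_nonneg (x := y₀) (y := y')]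
    · linarith [dist_triangle y₀ y' y'']
    · linarith [dist_triangle x'' x' x₀, dist_comm x'' x']
    · linarith [dist_triangle y y₀ y'', dist_comm y y₀, dist_nonneg (x := x') (y := x₀)]
    · linarith [dist_triangle y₀ y' y, dist_comm y' y]
    · exact dist_triangle _ _ _
  · intro x x'; rfl
  · intro y y'; rfl

end Aux

section Aux2
variable {X Y : Type*} [MetricSpace X] [MetricSpace Y]

lemma ghp_approx [CompactSpace X] [CompactSpace Y] [Nonempty X] [Nonempty Y]
    [MeasurableSpace X] [MeasurableSpace Y]
    (μ : Measure X) (μ' : Measure Y) [IsProbabilityMeasure μ]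
    (h : ghpDist μ μ' = 0) {ε : ℝ} (hε : 0 < ε) :
    ∃ δ : X ⊕ Y → X ⊕ Y → ℝ, IsGlueMetric δ ∧
      (∀ x : X, ∃ y : Y, δ (Sum.inl x) (Sum.inr y) < ε) ∧
      (∀ y : Y, ∃ x : X, δ (Sum.inl x) (Sum.inr y) < ε) ∧
      ∀ C : Set (X ⊕ Y), (∀ a ∉ C, ∃ η > 0, ∀ b ∈ C, η ≤ δ a b) →
        μ (Sum.inl ⁻¹' C) ≤ μ' (Sum.inr ⁻¹' {a | ∃ b ∈ C, δ a b < ε}) + ENNReal.ofReal ε := by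
  classical
  obtain ⟨x₀⟩ := ‹Nonempty X›
  obtain ⟨y₀⟩ := ‹Nonempty Y›
  have hSne : {r : ℝ | ∃ δ : X ⊕ Y → X ⊕ Y → ℝ, IsGlueMetric δ ∧
      r = max (glueHausdorffDist δ) (glueProkhorovDist δ μ μ')}.Nonempty :=
    ⟨_, glueδ x₀ y₀, isGlueMetric_glueδ x₀ y₀, rfl⟩
  unfold ghpDist at h
  obtain ⟨r, ⟨δ, hδ, rfl⟩, hrε⟩ := exists_lt_of_csInf_lt hSne (show _ < ε by rw [h]; exact hε)
  have hH : glueHausdorffDist δ < ε := lt_of_le_of_lt (le_max_left _ _) hrε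
  have hPlt : glueProkhorovDist δ μ μ' < ε := lt_of_le_of_lt (le_max_right _ _) hrε
  -- the Hausdorff set is nonempty
  set M : ℝ := Metric.diam (univ : Set X) + Metric.diam (univ : Set Y) +
    δ (Sum.inl x₀) (Sum.inr y₀) + 1 with hM
  have hMmem : M ∈ {ε : ℝ | 0 < ε ∧ (∀ x : X, ∃ y : Y, δ (Sum.inl x) (Sum.inr y) < ε) ∧
      (∀ y : Y, ∃ x : X, δ (Sum.inl x) (Sum.inr y) < ε)} := by
    have hdX : (0:ℝ) ≤ Metric.diam (univ : Set X) := Metric.diam_nonneg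
    have hdY : (0:ℝ) ≤ Metric.diam (univ : Set Y) := Metric.diam_nonneg
    have hd0 := hδ.nonneg (Sum.inl x₀) (Sum.inr y₀)
    refine ⟨by rw [hM]; linarith, ?_, ?_⟩
    · intro x
      refine ⟨y₀, ?_⟩
      have h1 := hδ.triangle (Sum.inl x) (Sum.inl x₀) (Sum.inr y₀)
      rw [hδ.restr_left] at h1
      have h2 : dist x x₀ ≤ Metric.diam (univ : Set X) :=
        Metric.dist_le_diam_of_mem isCompact_univ.isBounded (mem_univ _) (mem_univ _)
      rw [hM]; linarith
    · intro y
      refine ⟨x₀, ?_⟩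
      have h1 := hδ.triangle (Sum.inl x₀) (Sum.inr y₀) (Sum.inr y)
      rw [hδ.restr_right] at h1
      have h2 : dist y₀ y ≤ Metric.diam (univ : Set Y) :=
        Metric.dist_le_diam_of_mem isCompact_univ.isBounded (mem_univ _) (mem_univ _)
      rw [hM]; linarith
  obtain ⟨e1, ⟨he1pos, hc1, hc2⟩, he1⟩ := exists_lt_of_csInf_lt ⟨M, hMmem⟩ hH
  -- the Prokhorov set is nonempty
  have h1mem : (1:ℝ) ∈ {t : ℝ | 0 < t ∧ ∀ C : Set (X ⊕ Y),
      (∀ a ∉ C, ∃ η > 0, ∀ b ∈ C, η ≤ δ a b) →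
      μ (Sum.inl ⁻¹' C) ≤ μ' (Sum.inr ⁻¹' {a | ∃ b ∈ C, δ a b < t}) + ENNReal.ofReal t} := by
    refine ⟨one_pos, fun C _ => ?_⟩
    refine (prob_le_one).trans ?_
    rw [ENNReal.ofReal_one]
    exact le_add_self
  obtain ⟨e2, ⟨he2pos, hPc⟩, he2⟩ := exists_lt_of_csInf_lt ⟨1, h1mem⟩ hPlt
  refine ⟨δ, hδ, fun x => ?_, fun y => ?_, fun C hC => ?_⟩
  · obtain ⟨y, hy⟩ := hc1 x; exact ⟨y, hy.trans he1⟩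
  · obtain ⟨x, hx⟩ := hc2 y; exact ⟨x, hx.trans he1⟩
  · refine (hPc C hC).trans (add_le_add ?_ (ENNReal.ofReal_le_ofReal he2.le))
    refine measure_mono (preimage_mono ?_)
    rintro a ⟨b, hb, hab⟩
    exact ⟨b, hb, hab.trans he2⟩

lemma prokhorov_direct [CompactSpace X] [Nonempty X]
    [MeasurableSpace X] [MeasurableSpace Y]
    (μ : Measure X) (μ' : Measure Y)
    {δ : X ⊕ Y → X ⊕ Y → ℝ} (hδ : IsGlueMetric δ) {ε : ℝ}
    (hP : ∀ C : Set (X ⊕ Y), (∀ a ∉ C, ∃ η > 0, ∀ b ∈ C, η ≤ δ a b) →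
      μ (Sum.inl ⁻¹' C) ≤ μ' (Sum.inr ⁻¹' {a | ∃ b ∈ C, δ a b < ε}) + ENNReal.ofReal ε)
    {A : Set X} (hA : IsClosed A) :
    μ A ≤ μ' {y : Y | ∃ x ∈ A, δ (Sum.inl x) (Sum.inr y) < ε} + ENNReal.ofReal ε := by
  rcases A.eq_empty_or_nonempty with rfl | hne
  · simp
  have hclosed : ∀ a ∉ Sum.inl '' A, ∃ η > 0, ∀ b ∈ Sum.inl '' A, η ≤ δ a b := by
    rintro (x | y) ha
    · have hx : x ∉ A := fun hx => ha ⟨x, hx, rfl⟩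
      refine ⟨Metric.infDist x A, ?_, ?_⟩
      · exact (hA.notMem_iff_infDist_pos hne).1 hx
      · rintro b ⟨x', hx', rfl⟩
        rw [hδ.restr_left]
        exact Metric.infDist_le_dist_of_mem hx'
    · obtain ⟨x₁, hx₁, hmin⟩ := (hA.isCompact).exists_isMinOn hne
        ((hδ.continuous_left (Sum.inr y)).continuousOn)
      refine ⟨δ (Sum.inr y) (Sum.inl x₁), hδ.pos _ _ (by simp), ?_⟩
      rintro b ⟨x', hx', rfl⟩
      exact hmin hx'
  have h1 := hP _ hclosed
  rw [Set.preimage_image_eq _ Sum.inl_injective] at h1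
  refine h1.trans (add_le_add ?_ le_rfl)
  apply le_of_eq
  congr 1
  ext y
  simp only [mem_preimage, mem_setOf_eq]
  constructor
  · rintro ⟨b, ⟨x', hx', rfl⟩, hb⟩
    exact ⟨x', hx', by rw [hδ.symm]; exact hb⟩
  · rintro ⟨x', hx', hb⟩
    exact ⟨Sum.inl x', ⟨x', hx', rfl⟩, by rw [hδ.symm]; exact hb⟩

lemma prokhorov_flip [MeasurableSpace X] [MeasurableSpace Y] [OpensMeasurableSpace Y]
    (μ : Measure X) (μ' : Measure Y) [IsProbabilityMeasure μ] [IsProbabilityMeasure μ']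
    {δ : X ⊕ Y → X ⊕ Y → ℝ} (hδ : IsGlueMetric δ) {ε : ℝ}
    (hP : ∀ C : Set (X ⊕ Y), (∀ a ∉ C, ∃ η > 0, ∀ b ∈ C, η ≤ δ a b) →
      μ (Sum.inl ⁻¹' C) ≤ μ' (Sum.inr ⁻¹' {a | ∃ b ∈ C, δ a b < ε}) + ENNReal.ofReal ε)
    {D : Set Y} (hD : IsClosed D) :
    μ' D ≤ μ {x : X | ∃ y ∈ D, δ (Sum.inl x) (Sum.inr y) < ε} + ENNReal.ofReal ε := by
  classical
  set N : Set (X ⊕ Y) := {a | ∃ b ∈ Sum.inr '' D, δ a b < ε} with hN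
  have hclosed : ∀ a ∉ Nᶜ, ∃ η > 0, ∀ b ∈ Nᶜ, η ≤ δ a b := by
    intro a ha
    have ha' : a ∈ N := by simpa using ha
    obtain ⟨b, hb, hab⟩ := ha'
    refine ⟨ε - δ a b, by linarith [lt_of_le_of_lt (hδ.nonneg a b) hab, hab], ?_⟩
    intro c hc
    by_contra hlt
    push_neg at hlt
    refine hc ⟨b, hb, ?_⟩
    calc δ c b ≤ δ c a + δ a b := hδ.triangle _ _ _
      _ = δ a c + δ a b := by rw [hδ.symm]
      _ < (ε - δ a b) + δ a b := by linarith
      _ = ε := by ring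
  have h1 := hP _ hclosed
  set U : Set X := {x : X | ∃ y ∈ D, δ (Sum.inl x) (Sum.inr y) < ε} with hU
  have hUeq : Sum.inl ⁻¹' Nᶜ = Uᶜ := by
    ext x
    simp only [mem_preimage, mem_compl_iff, hN, hU, mem_setOf_eq]
    constructor
    · intro hx hx'
      obtain ⟨y, hy, hxy⟩ := hx'
      exact hx ⟨Sum.inr y, ⟨y, hy, rfl⟩, hxy⟩
    · intro hx hx'
      obtain ⟨b, ⟨y, hy, rfl⟩, hb⟩ := hx'
      exact hx ⟨y, hy, hb⟩
  have hW : Sum.inr ⁻¹' {a | ∃ b ∈ Nᶜ, δ a b < ε} ⊆ Dᶜ := by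
    intro y hy hyD
    obtain ⟨b, hb, hyb⟩ := hy
    refine hb ⟨Sum.inr y, ⟨y, hyD, rfl⟩, ?_⟩
    rw [hδ.symm]; exact hyb
  rw [hUeq] at h1
  have key : μ' D + 1 ≤ (μ U + ENNReal.ofReal ε) + 1 := by
    calc μ' D + 1 = μ' D + μ univ := by rw [measure_univ]
      _ ≤ μ' D + (μ U + μ Uᶜ) := by
          gcongr
          rw [← Set.union_compl_self U]
          exact measure_union_le _ _
      _ ≤ μ' D + (μ U + (μ' (Sum.inr ⁻¹' {a | ∃ b ∈ Nᶜ, δ a b < ε}) + ENNReal.ofReal ε)) := by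
          gcongr
      _ ≤ μ' D + (μ U + (μ' Dᶜ + ENNReal.ofReal ε)) := by
          gcongr
      _ = (μ U + ENNReal.ofReal ε) + (μ' D + μ' Dᶜ) := by ring
      _ = (μ U + ENNReal.ofReal ε) + 1 := by
          rw [measure_add_measure_compl hD.measurableSet, measure_univ]
  exact (ENNReal.add_le_add_iff_right ENNReal.one_ne_top).1 key

end Aux2

/-- The Gromov–Hausdorff–Prokhorov distance separates points: two compact metric
measure spaces at GHP distance zero are related by a measure-preserving bijective
isometry. -/
theorem ghpDist_eq_zero_iff_isometry
    {X Y : Type*} [MetricSpace X] [MetricSpace Y]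
    [CompactSpace X] [CompactSpace Y] [Nonempty X] [Nonempty Y]
    [MeasurableSpace X] [BorelSpace X] [MeasurableSpace Y] [BorelSpace Y]
    (μ : Measure X) (μ' : Measure Y)
    [IsProbabilityMeasure μ] [IsProbabilityMeasure μ']
    (h : ghpDist μ μ' = 0) :
    ∃ h : X ≃ᵢ Y, Measure.map (⇑h) μ = μ' := by
  classical
  set ε : ℕ → ℝ := fun n => 1 / (n + 1) with hεdef
  have εpos : ∀ n, 0 < ε n := fun n => by positivity
  have εlim : Filter.Tendsto ε Filter.atTop (nhds 0) := tendsto_one_div_add_atTop_nhds_zero_nat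
  have key := fun n : ℕ => ghp_approx μ μ' h (εpos n)
  choose δ hδ hXY hYX hP using key
  choose f0 hf0 using hXY
  -- approximate distance preservation
  have dist_f_le : ∀ (n : ℕ) (x x' : X), dist (f0 n x) (f0 n x') ≤ dist x x' + 2 * ε n := by
    intro n x x'
    have h1 := (hδ n).triangle (Sum.inr (f0 n x)) (Sum.inl x) (Sum.inr (f0 n x'))
    have h2 := (hδ n).triangle (Sum.inl x) (Sum.inl x') (Sum.inr (f0 n x'))
    rw [(hδ n).restr_right] at h1
    rw [(hδ n).restr_left] at h2
    have h3 := (hδ n).symm (Sum.inl x) (Sum.inr (f0 n x))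
    linarith [hf0 n x, hf0 n x']
  have dist_f_ge : ∀ (n : ℕ) (x x' : X), dist x x' ≤ dist (f0 n x) (f0 n x') + 2 * ε n := by
    intro n x x'
    have h1 := (hδ n).triangle (Sum.inl x) (Sum.inr (f0 n x)) (Sum.inl x')
    have h2 := (hδ n).triangle (Sum.inr (f0 n x)) (Sum.inr (f0 n x')) (Sum.inl x')
    rw [(hδ n).restr_left] at h1
    rw [(hδ n).restr_right] at h2
    have h3 := (hδ n).symm (Sum.inl x') (Sum.inr (f0 n x'))
    linarith [hf0 n x, hf0 n x']
  -- an ultrafilter extending atTop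
  let U : Ultrafilter ℕ := Ultrafilter.of Filter.atTop
  have hU : (U : Filter ℕ) ≤ Filter.atTop := Ultrafilter.of_le _
  have εlimU : Filter.Tendsto ε (U : Filter ℕ) (nhds 0) := εlim.mono_left hU
  have ulimX : ∀ g : ℕ → X, ∃ z : X, Filter.Tendsto g (U : Filter ℕ) (nhds z) := by
    intro g
    obtain ⟨z, -, hz⟩ := isCompact_univ.ultrafilter_le_nhds (U.map g)
      (Filter.le_principal_iff.2 Filter.univ_mem)
    exact ⟨z, by rw [Filter.Tendsto, ← Ultrafilter.coe_map]; exact hz⟩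
  have ulimY : ∀ g : ℕ → Y, ∃ z : Y, Filter.Tendsto g (U : Filter ℕ) (nhds z) := by
    intro g
    obtain ⟨z, -, hz⟩ := isCompact_univ.ultrafilter_le_nhds (U.map g)
      (Filter.le_principal_iff.2 Filter.univ_mem)
    exact ⟨z, by rw [Filter.Tendsto, ← Ultrafilter.coe_map]; exact hz⟩
  choose f hf using fun x : X => ulimY (fun n => f0 n x)
  -- f is distance preserving
  have hiso : ∀ x x' : X, dist (f x) (f x') = dist x x' := by
    intro x x'
    refine tendsto_nhds_unique ((hf x).dist (hf x')) ?_
    refine tendsto_of_tendsto_of_tendsto_of_le_of_le (g := fun n => dist x x' - 2 * ε n)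
      (h := fun n => dist x x' + 2 * ε n) ?_ ?_ ?_ ?_
    · have h0 : Filter.Tendsto (fun n => dist x x' - 2 * ε n) (U : Filter ℕ)
          (nhds (dist x x' - 2 * 0)) := tendsto_const_nhds.sub (εlimU.const_mul (2:ℝ))
      rw [mul_zero, sub_zero] at h0
      exact h0
    · have h0 : Filter.Tendsto (fun n => dist x x' + 2 * ε n) (U : Filter ℕ)
          (nhds (dist x x' + 2 * 0)) := tendsto_const_nhds.add (εlimU.const_mul (2:ℝ))
      rw [mul_zero, add_zero] at h0
      exact h0
    · exact fun n => by
        show dist x x' - 2 * ε n ≤ dist (f0 n x) (f0 n x')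
        linarith [dist_f_ge n x x']
    · exact fun n => by
        show dist (f0 n x) (f0 n x') ≤ dist x x' + 2 * ε n
        linarith [dist_f_le n x x']
  -- f is surjective
  have hsurj : Function.Surjective f := by
    intro y
    choose x0 hx0 using fun n => hYX n y
    obtain ⟨x, hx⟩ := ulimX x0
    refine ⟨x, ?_⟩
    have hb : ∀ n, dist (f x) y ≤
        dist (f x) (f0 n x) + (dist x (x0 n) + 2 * ε n) + 2 * ε n := by
      intro n
      have hd1 : dist (f0 n (x0 n)) y < 2 * ε n := by
        have t := (hδ n).triangle (Sum.inr (f0 n (x0 n))) (Sum.inl (x0 n)) (Sum.inr y)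
        rw [(hδ n).restr_right] at t
        have h3 := (hδ n).symm (Sum.inl (x0 n)) (Sum.inr (f0 n (x0 n)))
        linarith [hf0 n (x0 n), hx0 n]
      calc dist (f x) y ≤ dist (f x) (f0 n x) + dist (f0 n x) (f0 n (x0 n))
            + dist (f0 n (x0 n)) y := dist_triangle4 _ _ _ _
        _ ≤ dist (f x) (f0 n x) + (dist x (x0 n) + 2 * ε n) + 2 * ε n := by
            have := dist_f_le n x (x0 n); linarith
    have hlim : Filter.Tendsto
        (fun n => dist (f x) (f0 n x) + (dist x (x0 n) + 2 * ε n) + 2 * ε n)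
        (U : Filter ℕ) (nhds 0) := by
      have t1 : Filter.Tendsto (fun n => dist (f x) (f0 n x)) (U : Filter ℕ)
          (nhds (dist (f x) (f x))) := Filter.Tendsto.dist tendsto_const_nhds (hf x)
      rw [dist_self] at t1
      have t2 : Filter.Tendsto (fun n => dist x (x0 n)) (U : Filter ℕ)
          (nhds (dist x x)) := Filter.Tendsto.dist tendsto_const_nhds hx
      rw [dist_self] at t2
      have t3 : Filter.Tendsto (fun n => 2 * ε n) (U : Filter ℕ) (nhds (2 * 0)) :=
        εlimU.const_mul (2:ℝ)
      rw [mul_zero] at t3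
      have h0 : Filter.Tendsto
          (fun n => dist (f x) (f0 n x) + (dist x (x0 n) + 2 * ε n) + 2 * ε n)
          (U : Filter ℕ) (nhds (0 + (0 + 0) + 0)) := (t1.add (t2.add t3)).add t3
      simpa using h0
    have h0 : dist (f x) y ≤ 0 := ge_of_tendsto hlim (Filter.Eventually.of_forall hb)
    exact dist_eq_zero.1 (le_antisymm h0 dist_nonneg)
  have hinj : Function.Injective f := by
    intro a b hab
    have := hiso a b
    rw [hab, dist_self] at this
    exact dist_eq_zero.1 this.symm
  have hisoI : Isometry f := Isometry.of_dist_eq hiso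
  have hfc : Continuous f := hisoI.continuous
  have hfm : Measurable f := hfc.measurable
  -- uniform closeness of f0 n to f along the ultrafilter
  have hunif : ∀ r : ℝ, 0 < r → ∀ᶠ n in (U : Filter ℕ), ∀ x, dist (f0 n x) (f x) < r := by
    intro r hr
    by_contra hc
    have hc' : ∀ᶠ n in (U : Filter ℕ), ∃ x, r ≤ dist (f0 n x) (f x) := by
      rw [Filter.not_eventually] at hc
      rw [← Ultrafilter.frequently_iff_eventually]
      exact hc.mono (fun n hn => by push_neg at hn; exact hn)
    have hch : ∀ n, ∃ x : X, (∃ x', r ≤ dist (f0 n x') (f x')) → r ≤ dist (f0 n x) (f x) := by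
      intro n
      by_cases hn : ∃ x', r ≤ dist (f0 n x') (f x')
      · exact ⟨hn.choose, fun _ => hn.choose_spec⟩
      · exact ⟨Classical.arbitrary X, fun hx => absurd hx hn⟩
    choose xs hxs using hch
    obtain ⟨x₀, hx₀⟩ := ulimX xs
    have hb : ∀ n, dist (f0 n (xs n)) (f (xs n)) ≤
        (dist (xs n) x₀ + 2 * ε n) + dist (f0 n x₀) (f x₀) + dist x₀ (xs n) := by
      intro n
      calc dist (f0 n (xs n)) (f (xs n)) ≤ dist (f0 n (xs n)) (f0 n x₀)
            + dist (f0 n x₀) (f x₀) + dist (f x₀) (f (xs n)) := dist_triangle4 _ _ _ _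
        _ ≤ (dist (xs n) x₀ + 2 * ε n) + dist (f0 n x₀) (f x₀) + dist x₀ (xs n) := by
            have h1 := dist_f_le n (xs n) x₀
            have h2 := hiso x₀ (xs n)
            linarith
    have hlim : Filter.Tendsto
        (fun n => (dist (xs n) x₀ + 2 * ε n) + dist (f0 n x₀) (f x₀) + dist x₀ (xs n))
        (U : Filter ℕ) (nhds 0) := by
      have t1 : Filter.Tendsto (fun n => dist (xs n) x₀) (U : Filter ℕ)
          (nhds (dist x₀ x₀)) := Filter.Tendsto.dist hx₀ tendsto_const_nhds
      rw [dist_self] at t1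
      have t2 : Filter.Tendsto (fun n => dist (f0 n x₀) (f x₀)) (U : Filter ℕ)
          (nhds (dist (f x₀) (f x₀))) := Filter.Tendsto.dist (hf x₀) tendsto_const_nhds
      rw [dist_self] at t2
      have t3 : Filter.Tendsto (fun n => dist x₀ (xs n)) (U : Filter ℕ)
          (nhds (dist x₀ x₀)) := Filter.Tendsto.dist tendsto_const_nhds hx₀
      rw [dist_self] at t3
      have t4 : Filter.Tendsto (fun n => 2 * ε n) (U : Filter ℕ) (nhds (2 * 0)) :=
        εlimU.const_mul (2:ℝ)
      rw [mul_zero] at t4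
      have h0 : Filter.Tendsto
          (fun n => (dist (xs n) x₀ + 2 * ε n) + dist (f0 n x₀) (f x₀) + dist x₀ (xs n))
          (U : Filter ℕ) (nhds ((0 + 0) + 0 + 0)) := ((t1.add t4).add t2).add t3
      simpa using h0
    have hev : ∀ᶠ n in (U : Filter ℕ), dist (f0 n (xs n)) (f (xs n)) < r := by
      filter_upwards [hlim.eventually_lt_const hr] with n hn
      exact lt_of_le_of_lt (hb n) hn
    obtain ⟨n, hn1, hn2⟩ := (hc'.and hev).exists
    exact absurd (hxs n hn1) (not_le.2 hn2)
  -- measure comparison, both directions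
  have keyA : ∀ D : Set Y, IsClosed D → ∀ r : ℝ, 0 < r →
      μ' D ≤ μ (f ⁻¹' Metric.thickening (3 * r) D) + ENNReal.ofReal r := by
    intro D hD r hr
    obtain ⟨n, hn1, hn2⟩ := ((hunif r hr).and (εlimU.eventually_lt_const hr)).exists
    have h1 := prokhorov_flip μ μ' (hδ n) (hP n) hD
    refine h1.trans (add_le_add ?_ (ENNReal.ofReal_le_ofReal hn2.le))
    apply measure_mono
    rintro x ⟨y, hyD, hxy⟩
    rw [Set.mem_preimage, Metric.mem_thickening_iff]
    refine ⟨y, hyD, ?_⟩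
    have hd1 : dist (f0 n x) y < 2 * ε n := by
      have t := (hδ n).triangle (Sum.inr (f0 n x)) (Sum.inl x) (Sum.inr y)
      rw [(hδ n).restr_right] at t
      have h3 := (hδ n).symm (Sum.inl x) (Sum.inr (f0 n x))
      linarith [hf0 n x]
    have hd2 : dist (f x) (f0 n x) < r := by rw [dist_comm]; exact hn1 x
    calc dist (f x) y ≤ dist (f x) (f0 n x) + dist (f0 n x) y := dist_triangle _ _ _
      _ < r + 2 * ε n := by linarith
      _ ≤ 3 * r := by linarith
  have keyB : ∀ D : Set Y, IsClosed D → ∀ r : ℝ, 0 < r →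
      μ (f ⁻¹' D) ≤ μ' (Metric.thickening (3 * r) D) + ENNReal.ofReal r := by
    intro D hD r hr
    obtain ⟨n, hn1, hn2⟩ := ((hunif r hr).and (εlimU.eventually_lt_const hr)).exists
    have h1 := prokhorov_direct μ μ' (hδ n) (hP n) (hD.preimage hfc)
    refine h1.trans (add_le_add ?_ (ENNReal.ofReal_le_ofReal hn2.le))
    apply measure_mono
    rintro y ⟨x, hx, hxy⟩
    rw [Metric.mem_thickening_iff]
    refine ⟨f x, hx, ?_⟩
    have hd1 : dist y (f0 n x) < 2 * ε n := by
      have t := (hδ n).triangle (Sum.inr y) (Sum.inl x) (Sum.inr (f0 n x))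
      rw [(hδ n).restr_right] at t
      have h3 := (hδ n).symm (Sum.inl x) (Sum.inr y)
      linarith [hf0 n x]
    calc dist y (f x) ≤ dist y (f0 n x) + dist (f0 n x) (f x) := dist_triangle _ _ _
      _ < 2 * ε n + r := by linarith [hn1 x]
      _ ≤ 3 * r := by linarith
  -- pass to the limit
  have h3r : Filter.Tendsto (fun r : ℝ => 3 * r)
      (nhdsWithin 0 (Set.Ioi 0)) (nhdsWithin 0 (Set.Ioi 0)) := by
    apply tendsto_nhdsWithin_of_tendsto_nhds_of_eventually_within
    · have ht : Filter.Tendsto (fun r : ℝ => 3 * r) (nhds 0) (nhds (3 * 0)) :=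
        (continuous_const.mul continuous_id).tendsto 0
      simpa using ht.mono_left nhdsWithin_le_nhds
    · filter_upwards [self_mem_nhdsWithin] with r hr
      exact mul_pos (by norm_num : (0:ℝ) < 3) hr
  have hofReal : Filter.Tendsto (fun r : ℝ => ENNReal.ofReal r)
      (nhdsWithin 0 (Set.Ioi 0)) (nhds 0) := by
    have := (ENNReal.continuous_ofReal.tendsto 0).mono_left
      (nhdsWithin_le_nhds (s := Set.Ioi (0:ℝ)))
    simpa using this
  have hprob : IsProbabilityMeasure (μ.map f) := Measure.isProbabilityMeasure_map hfm.aemeasurable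
  have closedEq : ∀ D : Set Y, IsClosed D → μ (f ⁻¹' D) = μ' D := by
    intro D hD
    have t1 : Filter.Tendsto (fun r : ℝ => μ' (Metric.thickening (3 * r) D) + ENNReal.ofReal r)
        (nhdsWithin 0 (Set.Ioi 0)) (nhds (μ' D)) := by
      have := (tendsto_measure_thickening_of_isClosed (μ := μ')
        ⟨1, one_pos, measure_ne_top _ _⟩ hD).comp h3r
      simpa using this.add hofReal
    have le1 : μ (f ⁻¹' D) ≤ μ' D := by
      refine ge_of_tendsto t1 ?_
      filter_upwards [self_mem_nhdsWithin] with r hr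
      exact keyB D hD r hr
    have hmap : ∀ s : Set Y, MeasurableSet s → μ (f ⁻¹' s) = (μ.map f) s := fun s hs =>
      (Measure.map_apply hfm hs).symm
    have t2 : Filter.Tendsto
        (fun r : ℝ => (μ.map f) (Metric.thickening (3 * r) D) + ENNReal.ofReal r)
        (nhdsWithin 0 (Set.Ioi 0)) (nhds ((μ.map f) D)) := by
      have := (tendsto_measure_thickening_of_isClosed (μ := μ.map f)
        ⟨1, one_pos, measure_ne_top _ _⟩ hD).comp h3r
      simpa using this.add hofReal
    have le2 : μ' D ≤ (μ.map f) D := by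
      refine ge_of_tendsto t2 ?_
      filter_upwards [self_mem_nhdsWithin] with r hr
      rw [← hmap _ Metric.isOpen_thickening.measurableSet]
      exact keyA D hD r hr
    rw [← hmap D hD.measurableSet] at le2
    exact le_antisymm le1 le2
  have hmapμ : Measure.map f μ = μ' := by
    refine ext_of_generate_finite {s : Set Y | IsClosed s}
      (BorelSpace.measurable_eq.trans borel_eq_generateFrom_isClosed)
      (fun s hs t ht _ => hs.inter ht) ?_ ?_
    · intro s hs
      rw [Measure.map_apply hfm hs.measurableSet]
      exact closedEq s hs
    · simp [measure_univ]
  exact ⟨⟨Equiv.ofBijective f ⟨hinj, hsurj⟩, hisoI⟩, hmapμ⟩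
end

section
/- For nonempty compact metric spaces (X,d), (X',d') with Borel probability measures μ, μ', one has (1/3)·Δ_GHP((X,d,μ),(X',d',μ')) ≤ d_GHP((X,d,μ),(X',d',μ')) ≤ 2·Δ_GHP((X,d,μ),(X',d',μ')), where Δ_GHP is the infimum of all ε > 0 such that the two spaces are ε-close. -/
open MeasureTheory Set

section EpsClose

variable {X Y : Type*}

/-- `f` is an `ε`-isometry: it distorts distances by at most `ε` and its range is an
`ε`-net. -/
def IsEpsIsometry [MetricSpace X] [MetricSpace Y] (ε : ℝ) (f : X → Y) : Prop :=
  (∀ x x' : X, |dist x x' - dist (f x) (f x')| ≤ ε) ∧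
    ∀ y : Y, ∃ x : X, dist y (f x) < ε

/-- The (one-sided) Prokhorov distance between two Borel measures on a metric space:
the infimum of `ε > 0` such that `μ(C) ≤ ν(C^ε) + ε` for every closed `C`. -/
noncomputable def prokhorovDist {Ω : Type*} [MetricSpace Ω] [MeasurableSpace Ω]
    (μ ν : Measure Ω) : ℝ :=
  sInf {ε : ℝ | 0 < ε ∧ ∀ C : Set Ω, IsClosed C →
    μ C ≤ ν (Metric.thickening ε C) + ENNReal.ofReal ε}

/-- The spaces are `ε`-close: there are measurable `ε`-isometries in both directions
whose pushforward measures are `ε`-close in Prokhorov distance to the target measure. -/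
def EpsClose [MetricSpace X] [MetricSpace Y] [MeasurableSpace X] [MeasurableSpace Y]
    (ε : ℝ) (μ : Measure X) (μ' : Measure Y) : Prop :=
  ∃ f : X → Y, ∃ g : Y → X, Measurable f ∧ Measurable g ∧
    IsEpsIsometry ε f ∧ IsEpsIsometry ε g ∧
    prokhorovDist (Measure.map f μ) μ' ≤ ε ∧ prokhorovDist (Measure.map g μ') μ ≤ ε

/-- The Evans–Winter quasi-distance `Δ_GHP`. -/
noncomputable def deltaGHP [MetricSpace X] [MetricSpace Y]
    [MeasurableSpace X] [MeasurableSpace Y] (μ : Measure X) (μ' : Measure Y) : ℝ :=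
  sInf {ε : ℝ | 0 < ε ∧ EpsClose ε μ μ'}

end EpsClose

section AuxLemmas

open Sum Metric MeasureTheory Set

variable {A B : Type*}

theorem IsGlueMetric.nonneg_s5 [MetricSpace A] [MetricSpace B]
    {δ : A ⊕ B → A ⊕ B → ℝ} (h : IsGlueMetric δ) (a b : A ⊕ B) : 0 ≤ δ a b := by
  have t := h.triangle a b a
  have r := h.refl a
  have s := h.symm a b
  linarith

theorem IsGlueMetric.flip [MetricSpace A] [MetricSpace B]
    {δ : A ⊕ B → A ⊕ B → ℝ} (h : IsGlueMetric δ) :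
    IsGlueMetric (fun a b : B ⊕ A => δ a.swap b.swap) where
  refl a := h.refl _
  pos a b hab := h.pos _ _ (fun e => hab (by simpa using congrArg Sum.swap e))
  symm a b := h.symm _ _
  triangle a b c := h.triangle _ _ _
  restr_left y y' := h.restr_right y y'
  restr_right x x' := h.restr_left x x'

/-- The Hausdorff-distance defining set is nonempty for compact spaces. -/
theorem IsGlueMetric.exists_haus_bound [MetricSpace A] [MetricSpace B]
    [CompactSpace A] [CompactSpace B] [Nonempty A] [Nonempty B]
    {δ : A ⊕ B → A ⊕ B → ℝ} (h : IsGlueMetric δ) :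
    ∃ ε : ℝ, 0 < ε ∧ (∀ x : A, ∃ y : B, δ (inl x) (inr y) < ε) ∧
      ∀ y : B, ∃ x : A, δ (inl x) (inr y) < ε := by
  obtain ⟨x₀⟩ := ‹Nonempty A›
  obtain ⟨y₀⟩ := ‹Nonempty B›
  have hdA : ∀ x : A, dist x x₀ ≤ Metric.diam (Set.univ : Set A) := fun x =>
    Metric.dist_le_diam_of_mem isCompact_univ.isBounded (mem_univ _) (mem_univ _)
  have hdB : ∀ y : B, dist y₀ y ≤ Metric.diam (Set.univ : Set B) := fun y =>
    Metric.dist_le_diam_of_mem isCompact_univ.isBounded (mem_univ _) (mem_univ _)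
  refine ⟨Metric.diam (Set.univ : Set A) + Metric.diam (Set.univ : Set B)
      + δ (inl x₀) (inr y₀) + 1, ?_, fun x => ⟨y₀, ?_⟩, fun y => ⟨x₀, ?_⟩⟩
  · have := h.nonneg_s5 (inl x₀) (inr y₀)
    have := Metric.diam_nonneg (s := (Set.univ : Set A))
    have := Metric.diam_nonneg (s := (Set.univ : Set B))
    linarith
  · have t := h.triangle (inl x) (inl x₀) (inr y₀)
    rw [h.restr_left] at t
    have := hdA x
    have := Metric.diam_nonneg (s := (Set.univ : Set B))
    linarith
  · have t := h.triangle (inl x₀) (inr y₀) (inr y)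
    rw [h.restr_right] at t
    have := hdB y
    have := Metric.diam_nonneg (s := (Set.univ : Set A))
    linarith

theorem glueHausdorffDist_nonneg [MetricSpace A] [MetricSpace B]
    (δ : A ⊕ B → A ⊕ B → ℝ) : 0 ≤ glueHausdorffDist δ :=
  Real.sInf_nonneg fun _ hx => hx.1.le

theorem glueProkhorovDist_nonneg [MetricSpace A] [MetricSpace B]
    [MeasurableSpace A] [MeasurableSpace B] (δ : A ⊕ B → A ⊕ B → ℝ)
    (α : Measure A) (β : Measure B) : 0 ≤ glueProkhorovDist δ α β :=
  Real.sInf_nonneg fun _ hx => hx.1.le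

theorem glueHausdorffDist_spec [MetricSpace A] [MetricSpace B]
    [CompactSpace A] [CompactSpace B] [Nonempty A] [Nonempty B]
    {δ : A ⊕ B → A ⊕ B → ℝ} (h : IsGlueMetric δ) {ε : ℝ}
    (hlt : glueHausdorffDist δ < ε) :
    (∀ x : A, ∃ y : B, δ (inl x) (inr y) < ε) ∧
      ∀ y : B, ∃ x : A, δ (inl x) (inr y) < ε := by
  obtain ⟨e₀, he₀⟩ := h.exists_haus_bound
  obtain ⟨e, ⟨hep, he1, he2⟩, helt⟩ := exists_lt_of_csInf_lt ⟨e₀, he₀⟩ hlt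
  exact ⟨fun x => (he1 x).imp fun y hy => hy.trans helt,
    fun y => (he2 y).imp fun x hx => hx.trans helt⟩

theorem glueProkhorov_mem_two [MetricSpace A] [MetricSpace B]
    [MeasurableSpace A] [MeasurableSpace B] (δ : A ⊕ B → A ⊕ B → ℝ)
    (α : Measure A) (β : Measure B) [IsProbabilityMeasure α] :
    (2 : ℝ) ∈ {ε : ℝ | 0 < ε ∧ ∀ C : Set (A ⊕ B),
      (∀ a ∉ C, ∃ η > 0, ∀ b ∈ C, η ≤ δ a b) →
      α (Sum.inl ⁻¹' C) ≤ β (Sum.inr ⁻¹' {a | ∃ b ∈ C, δ a b < ε}) + ENNReal.ofReal ε} := by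
  refine ⟨two_pos, fun C _ => ?_⟩
  calc α (Sum.inl ⁻¹' C) ≤ 1 := prob_le_one
    _ ≤ ENNReal.ofReal 2 := by
        rw [show ((2:ℝ)) = ((2:ℕ):ℝ) by norm_num, ENNReal.ofReal_natCast]
        exact one_le_two
    _ ≤ _ := le_add_self

theorem glueProkhorovDist_spec [MetricSpace A] [MetricSpace B]
    [MeasurableSpace A] [MeasurableSpace B] {δ : A ⊕ B → A ⊕ B → ℝ}
    {α : Measure A} {β : Measure B} [IsProbabilityMeasure α] {ε : ℝ}
    (hlt : glueProkhorovDist δ α β < ε) :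
    ∀ C : Set (A ⊕ B), (∀ a ∉ C, ∃ η > 0, ∀ b ∈ C, η ≤ δ a b) →
      α (Sum.inl ⁻¹' C) ≤ β (Sum.inr ⁻¹' {a | ∃ b ∈ C, δ a b < ε}) + ENNReal.ofReal ε := by
  obtain ⟨e, ⟨hep, he⟩, helt⟩ :=
    exists_lt_of_csInf_lt ⟨2, glueProkhorov_mem_two δ α β⟩ hlt
  intro C hC
  refine (he C hC).trans (add_le_add ?_ (ENNReal.ofReal_le_ofReal helt.le))
  exact measure_mono (preimage_mono fun a ⟨b, hb, hd⟩ => ⟨b, hb, hd.trans helt⟩)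

end AuxLemmas
section AuxLemmas2

open Sum Metric MeasureTheory Set

variable {Ω : Type*} [MetricSpace Ω] [MeasurableSpace Ω]

theorem prokhorovDist_le {α β : Measure Ω} {ε : ℝ} (hε : 0 < ε)
    (h : ∀ C : Set Ω, IsClosed C → α C ≤ β (Metric.thickening ε C) + ENNReal.ofReal ε) :
    prokhorovDist α β ≤ ε :=
  csInf_le ⟨0, fun _ hx => hx.1.le⟩ ⟨hε, h⟩

theorem prokhorovDist_spec {α β : Measure Ω} [IsProbabilityMeasure α] {ε : ℝ}
    (hlt : prokhorovDist α β < ε) :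
    ∀ C : Set Ω, IsClosed C → α C ≤ β (Metric.thickening ε C) + ENNReal.ofReal ε := by
  have h2 : (2:ℝ) ∈ {ε : ℝ | 0 < ε ∧ ∀ C : Set Ω, IsClosed C →
      α C ≤ β (Metric.thickening ε C) + ENNReal.ofReal ε} := by
    refine ⟨two_pos, fun C _ => ?_⟩
    calc α C ≤ 1 := prob_le_one
      _ ≤ ENNReal.ofReal 2 := by
          rw [show ((2:ℝ)) = ((2:ℕ):ℝ) by norm_num, ENNReal.ofReal_natCast]
          exact one_le_two
      _ ≤ _ := le_add_self
  obtain ⟨e, ⟨hep, he⟩, helt⟩ := exists_lt_of_csInf_lt ⟨2, h2⟩ hlt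
  intro C hC
  refine (he C hC).trans (add_le_add ?_ (ENNReal.ofReal_le_ofReal helt.le))
  exact measure_mono (Metric.thickening_mono helt.le C)

theorem prokhorovDist_le_two {α β : Measure Ω} [IsProbabilityMeasure α] :
    prokhorovDist α β ≤ 2 := by
  refine prokhorovDist_le two_pos fun C _ => ?_
  calc α C ≤ 1 := prob_le_one
    _ ≤ ENNReal.ofReal 2 := by
        rw [show ((2:ℝ)) = ((2:ℕ):ℝ) by norm_num, ENNReal.ofReal_natCast]
        exact one_le_two
    _ ≤ _ := le_add_self

end AuxLemmas2

section Reversal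

open Sum Metric MeasureTheory Set

variable {A B : Type*} [MetricSpace A] [MetricSpace B]
  [MeasurableSpace A] [OpensMeasurableSpace A] [MeasurableSpace B] [OpensMeasurableSpace B]

/-- Reversal of the one-sided Prokhorov inequality for probability measures. -/
theorem prokhorov_reversal {δ : A ⊕ B → A ⊕ B → ℝ} (hδ : IsGlueMetric δ)
    {α : Measure A} {β : Measure B} [IsProbabilityMeasure α] [IsProbabilityMeasure β]
    {ε : ℝ} (hε : 0 < ε)
    (h : ∀ C : Set (A ⊕ B), (∀ a ∉ C, ∃ η > 0, ∀ b ∈ C, η ≤ δ a b) →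
      α (Sum.inl ⁻¹' C) ≤ β (Sum.inr ⁻¹' {a | ∃ b ∈ C, δ a b < ε}) + ENNReal.ofReal ε) :
    ∀ C : Set (A ⊕ B), (∀ a ∉ C, ∃ η > 0, ∀ b ∈ C, η ≤ δ a b) →
      β (Sum.inr ⁻¹' C) ≤ α (Sum.inl ⁻¹' {a | ∃ b ∈ C, δ a b < ε}) + ENNReal.ofReal ε := by
  intro C hC
  set D : Set (A ⊕ B) := {a | ∀ b ∈ C, ε ≤ δ a b} with hD
  have hDclosed : ∀ a ∉ D, ∃ η > 0, ∀ b ∈ D, η ≤ δ a b := by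
    intro a ha
    simp only [hD, mem_setOf_eq, not_forall] at ha
    obtain ⟨b, hbC, hab⟩ := ha
    push_neg at hab
    refine ⟨ε - δ a b, by linarith, fun b' hb' => ?_⟩
    have h1 : ε ≤ δ b' b := hb' b hbC
    have h2 : δ b' b ≤ δ b' a + δ a b := hδ.triangle b' a b
    have h3 : δ b' a = δ a b' := hδ.symm b' a
    linarith
  have key := h D hDclosed
  -- identify the two sets
  have hUopen : IsOpen {x : A | ∃ b ∈ C, δ (inl x) b < ε} := by
    rw [Metric.isOpen_iff]
    rintro x ⟨b, hbC, hlt⟩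
    refine ⟨ε - δ (inl x) b, by linarith, fun x' hx' => ?_⟩
    refine ⟨b, hbC, ?_⟩
    have t := hδ.triangle (inl x') (inl x) b
    rw [hδ.restr_left] at t
    rw [Metric.mem_ball] at hx'
    linarith
  have hCclosed : IsClosed (Sum.inr ⁻¹' C : Set B) := by
    rw [← isOpen_compl_iff, Metric.isOpen_iff]
    intro y hy
    obtain ⟨η, hη, hb⟩ := hC (inr y) hy
    refine ⟨η, hη, fun y' hy' => ?_⟩
    intro hy'C
    have := hb (inr y') hy'C
    rw [hδ.restr_right] at this
    rw [Metric.mem_ball, dist_comm] at hy'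
    linarith
  have hinlD : (Sum.inl ⁻¹' D : Set A) = {x : A | ∃ b ∈ C, δ (inl x) b < ε}ᶜ := by
    ext x
    simp only [hD, mem_preimage, mem_setOf_eq, mem_compl_iff, not_exists, not_and, not_lt]
  have hsub : (Sum.inr ⁻¹' {a | ∃ b ∈ D, δ a b < ε} : Set B) ⊆ (Sum.inr ⁻¹' C)ᶜ := by
    rintro y ⟨a, haD, hlt⟩ hyC
    have := haD (inr y) hyC
    rw [hδ.symm] at this
    linarith
  have hUeq : (Sum.inl ⁻¹' {a | ∃ b ∈ C, δ a b < ε} : Set A) = {x : A | ∃ b ∈ C, δ (inl x) b < ε} := rfl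
  -- measure arithmetic
  set p := α (Sum.inl ⁻¹' {a | ∃ b ∈ C, δ a b < ε}) with hp
  set q := β (Sum.inr ⁻¹' C) with hq
  have hkey2 : 1 - p ≤ (1 - q) + ENNReal.ofReal ε := by
    have e1 : α (Sum.inl ⁻¹' D) = 1 - p := by
      rw [hinlD, prob_compl_eq_one_sub hUopen.measurableSet, hp, hUeq]
    have e2 : β (Sum.inr ⁻¹' {a | ∃ b ∈ D, δ a b < ε}) ≤ 1 - q := by
      refine le_trans (measure_mono hsub) ?_
      rw [prob_compl_eq_one_sub hCclosed.measurableSet]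
    calc 1 - p = α (Sum.inl ⁻¹' D) := e1.symm
      _ ≤ β (Sum.inr ⁻¹' {a | ∃ b ∈ D, δ a b < ε}) + ENNReal.ofReal ε := key
      _ ≤ (1 - q) + ENNReal.ofReal ε := add_le_add e2 le_rfl
  -- conclude q ≤ p + ε
  have hp1 : p ≤ 1 := prob_le_one
  have hq1 : q ≤ 1 := prob_le_one
  have h1 : q + (1 - p) ≤ (p + ENNReal.ofReal ε) + (1 - p) := by
    calc q + (1 - p) ≤ q + ((1 - q) + ENNReal.ofReal ε) := add_le_add le_rfl hkey2
      _ = (q + (1 - q)) + ENNReal.ofReal ε := by ring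
      _ = 1 + ENNReal.ofReal ε := by rw [add_tsub_cancel_of_le hq1]
      _ = (p + (1 - p)) + ENNReal.ofReal ε := by rw [add_tsub_cancel_of_le hp1]
      _ = (p + ENNReal.ofReal ε) + (1 - p) := by ring
  have hfin : (1 - p) ≠ ⊤ := by
    exact ne_top_of_le_ne_top ENNReal.one_ne_top tsub_le_self
  exact (ENNReal.add_le_add_iff_right hfin).1 h1

end Reversal
section LemA

open Sum Metric MeasureTheory Set

/-- From a glue metric with Hausdorff and Prokhorov control, produce a measurable
almost-isometry. -/
theorem exists_eps_isometry {A B : Type*} [MetricSpace A] [MetricSpace B]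
    [CompactSpace A] [Nonempty A] [Nonempty B]
    [MeasurableSpace A] [BorelSpace A] [MeasurableSpace B] [OpensMeasurableSpace B]
    {δ : A ⊕ B → A ⊕ B → ℝ} (hδ : IsGlueMetric δ)
    (α : Measure A) (β : Measure B) [IsFiniteMeasure α]
    {ε θ : ℝ} (hε : 0 < ε) (hθ : 0 < θ)
    (h1 : ∀ a : A, ∃ b : B, δ (inl a) (inr b) < ε)
    (h2 : ∀ b : B, ∃ a : A, δ (inl a) (inr b) < ε)
    (h3 : ∀ C : Set (A ⊕ B), (∀ a ∉ C, ∃ η > 0, ∀ b ∈ C, η ≤ δ a b) →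
      α (Sum.inl ⁻¹' C) ≤ β (Sum.inr ⁻¹' {a | ∃ b ∈ C, δ a b < ε}) + ENNReal.ofReal ε) :
    ∃ f : A → B, Measurable f ∧ IsEpsIsometry (2*ε + 2*θ) f ∧
      prokhorovDist (Measure.map f α) β ≤ 2*ε + 2*θ := by
  classical
  -- a dense sequence in A
  obtain ⟨u, hu⟩ := TopologicalSpace.exists_dense_seq A
  have hex : ∀ x : A, ∃ n : ℕ, dist x (u n) < θ := fun x => hu.exists_dist_lt x hθ
  set T : A → ℕ := fun x => Nat.find (hex x) with hT
  have hTspec : ∀ x, dist x (u (T x)) < θ := fun x => Nat.find_spec (hex x)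
  have hTmeas : Measurable T := by
    apply measurable_to_countable'
    intro n
    have : T ⁻¹' {n} = {x : A | dist x (u n) < θ} ∩
        ⋂ (m : ℕ) (_ : m < n), {x : A | ¬ dist x (u m) < θ} := by
      ext x
      simp only [hT, mem_preimage, mem_singleton_iff, Nat.find_eq_iff (hex x),
        mem_inter_iff, mem_setOf_eq, mem_iInter]
    rw [this]
    refine MeasurableSet.inter ?_ (MeasurableSet.iInter fun m => MeasurableSet.iInter fun _ => ?_)
    · exact measurableSet_lt (measurable_id.dist measurable_const) measurable_const
    · exact (measurableSet_lt (measurable_id.dist measurable_const) measurable_const).compl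
  set F : ℕ → B := fun n => (h1 (u n)).choose with hF
  have hFspec : ∀ n, δ (inl (u n)) (inr (F n)) < ε := fun n => (h1 (u n)).choose_spec
  set f : A → B := fun x => F (T x) with hf
  have hfmeas : Measurable f := by
    have : f = F ∘ T := rfl
    rw [this]
    exact measurable_from_nat.comp hTmeas
  have key : ∀ x, δ (inl x) (inr (f x)) < ε + θ := by
    intro x
    have t := hδ.triangle (inl x) (inl (u (T x))) (inr (F (T x)))
    rw [hδ.restr_left] at t
    have := hTspec x
    have := hFspec (T x)
    simp only [hf]
    linarith
  refine ⟨f, hfmeas, ⟨?_, ?_⟩, ?_⟩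
  · -- distortion
    intro x x'
    have e1 : dist (f x) (f x') = δ (inr (f x)) (inr (f x')) := (hδ.restr_right _ _).symm
    have e2 : dist x x' = δ (inl x) (inl x') := (hδ.restr_left _ _).symm
    have k1 := key x
    have k2 := key x'
    have t1 : δ (inr (f x)) (inr (f x')) ≤
        δ (inr (f x)) (inl x) + δ (inl x) (inl x') + δ (inl x') (inr (f x')) := by
      have := hδ.triangle (inr (f x)) (inl x) (inr (f x'))
      have := hδ.triangle (inl x) (inl x') (inr (f x'))
      linarith
    have t2 : δ (inl x) (inl x') ≤
        δ (inl x) (inr (f x)) + δ (inr (f x)) (inr (f x')) + δ (inr (f x')) (inl x') := by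
      have := hδ.triangle (inl x) (inr (f x)) (inl x')
      have := hδ.triangle (inr (f x)) (inr (f x')) (inl x')
      linarith
    have s1 := hδ.symm (inr (f x)) (inl x)
    have s2 := hδ.symm (inr (f x')) (inl x')
    rw [abs_sub_le_iff]
    constructor <;> [skip; skip] <;> rw [e1, e2] <;> linarith
  · -- net
    intro b
    obtain ⟨a, ha⟩ := h2 b
    refine ⟨a, ?_⟩
    have e : dist b (f a) = δ (inr b) (inr (f a)) := (hδ.restr_right _ _).symm
    have t := hδ.triangle (inr b) (inl a) (inr (f a))
    have s := hδ.symm (inr b) (inl a)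
    have := key a
    rw [e]
    linarith
  · -- Prokhorov bound
    refine prokhorovDist_le (by linarith) ?_
    intro D hD
    set C : Set (A ⊕ B) := {c | ∀ γ > 0, ∃ a : A, f a ∈ D ∧ δ c (inl a) < γ} with hC
    have hCclosed : ∀ c ∉ C, ∃ η > 0, ∀ b ∈ C, η ≤ δ c b := by
      intro c hc
      simp only [hC, mem_setOf_eq, not_forall] at hc
      obtain ⟨γ, hγ, hcγ⟩ := hc
      push_neg at hcγ
      refine ⟨γ/2, by linarith, fun b hb => ?_⟩
      obtain ⟨a, haD, hlt⟩ := hb (γ/2) (by linarith)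
      have h4 := hcγ a haD
      have t := hδ.triangle c b (inl a)
      linarith
    have hsub1 : f ⁻¹' D ⊆ Sum.inl ⁻¹' C := by
      intro a ha
      intro γ hγ
      exact ⟨a, ha, by rw [hδ.refl]; exact hγ⟩
    have hsub2 : (Sum.inr ⁻¹' {c | ∃ b ∈ C, δ c b < ε} : Set B) ⊆
        Metric.thickening (2*ε + 2*θ) D := by
      rintro b ⟨c, hcC, hlt⟩
      obtain ⟨a, haD, hlt2⟩ := hcC (ε - δ (inr b) c) (by linarith)
      have t1 := hδ.triangle (inr b) c (inl a)
      have t2 := hδ.triangle (inr b) (inl a) (inr (f a))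
      have := key a
      rw [Metric.mem_thickening_iff]
      refine ⟨f a, haD, ?_⟩
      have e : dist b (f a) = δ (inr b) (inr (f a)) := (hδ.restr_right _ _).symm
      rw [e]
      linarith
    calc Measure.map f α D = α (f ⁻¹' D) := Measure.map_apply hfmeas hD.measurableSet
      _ ≤ α (Sum.inl ⁻¹' C) := measure_mono hsub1
      _ ≤ β (Sum.inr ⁻¹' {c | ∃ b ∈ C, δ c b < ε}) + ENNReal.ofReal ε := h3 C hCclosed
      _ ≤ β (Metric.thickening (2*ε + 2*θ) D) + ENNReal.ofReal (2*ε + 2*θ) :=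
          add_le_add (measure_mono hsub2) (ENNReal.ofReal_le_ofReal (by linarith))

end LemA
section LemC

open Sum Metric MeasureTheory Set

/-- The glue metric induced by an almost-isometry `f`. -/
noncomputable def glueOfFun {A B : Type*} [MetricSpace A] [MetricSpace B]
    (f : A → B) (ε : ℝ) : A ⊕ B → A ⊕ B → ℝ
  | .inl x, .inl x' => dist x x'
  | .inl x, .inr y => (⨅ p : A, (dist x p + dist (f p) y)) + ε
  | .inr y, .inl x => (⨅ p : A, (dist x p + dist (f p) y)) + ε
  | .inr y, .inr y' => dist y y'

variable {A B : Type*} [MetricSpace A] [MetricSpace B]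

theorem glue_bdd (f : A → B) (x : A) (y : B) :
    BddBelow (Set.range fun p : A => dist x p + dist (f p) y) :=
  ⟨0, by rintro r ⟨p, rfl⟩; positivity⟩

theorem phi_le (f : A → B) (x : A) (y : B) (p : A) :
    (⨅ p : A, (dist x p + dist (f p) y)) ≤ dist x p + dist (f p) y :=
  ciInf_le (glue_bdd f x y) p

theorem phi_nonneg [Nonempty A] (f : A → B) (x : A) (y : B) :
    0 ≤ ⨅ p : A, (dist x p + dist (f p) y) :=
  le_ciInf fun p => by positivity

theorem isGlueMetric_glueOfFun [Nonempty A]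
    {f : A → B} {ε : ℝ} (hε : 0 < ε) (hf : ∀ x x', |dist x x' - dist (f x) (f x')| ≤ ε) :
    IsGlueMetric (glueOfFun f ε) where
  refl a := by cases a <;> simp [glueOfFun]
  pos a b hab := by
    rcases a with x | y <;> rcases b with x' | y'
    · exact dist_pos.2 fun e => hab (by rw [e])
    · have := phi_nonneg f x y'; simp only [glueOfFun]; linarith
    · have := phi_nonneg f x' y; simp only [glueOfFun]; linarith
    · exact dist_pos.2 fun e => hab (by rw [e])
  symm a b := by
    rcases a with x | y <;> rcases b with x' | y' <;> simp [glueOfFun, dist_comm]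
  triangle a b c := by
    rcases a with x | y <;> rcases b with x' | y' <;> rcases c with x'' | y'' <;>
      simp only [glueOfFun]
    · exact dist_triangle _ _ _
    · -- inl inl inr
      have key : (⨅ p : A, (dist x p + dist (f p) y'')) - dist x x' ≤
          ⨅ p : A, (dist x' p + dist (f p) y'') := by
        refine le_ciInf fun p => ?_
        have h1 := phi_le f x y'' p
        have h2 := dist_triangle x x' p
        linarith
      linarith
    · -- inl inr inl
      have key : dist x x'' - ((⨅ p : A, (dist x'' p + dist (f p) y')) + 2 * ε) ≤
          ⨅ p : A, (dist x p + dist (f p) y') := by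
        refine le_ciInf fun p => ?_
        have key2 : dist x x'' - (dist x p + dist (f p) y') - 2 * ε ≤
            ⨅ q : A, (dist x'' q + dist (f q) y') := by
          refine le_ciInf fun q => ?_
          have t2 : dist x x'' ≤ dist x p + dist p q + dist q x'' := by
            have := dist_triangle x p x''
            have := dist_triangle p q x''
            linarith
          have t3 := (abs_le.1 (hf p q)).2
          have t4 := dist_triangle (f p) y' (f q)
          have c1 := dist_comm (f q) y'
          have c2 := dist_comm q x''
          linarith
        linarith
      linarith
    · -- inl inr inr
      have key : (⨅ p : A, (dist x p + dist (f p) y'')) - dist y' y'' ≤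
          ⨅ p : A, (dist x p + dist (f p) y') := by
        refine le_ciInf fun p => ?_
        have h1 := phi_le f x y'' p
        have h2 := dist_triangle (f p) y' y''
        linarith
      linarith
    · -- inr inl inl
      have key : (⨅ p : A, (dist x'' p + dist (f p) y)) - dist x' x'' ≤
          ⨅ p : A, (dist x' p + dist (f p) y) := by
        refine le_ciInf fun p => ?_
        have h1 := phi_le f x'' y p
        have h2 := dist_triangle x'' x' p
        have c1 := dist_comm x' x''
        linarith
      linarith
    · -- inr inl inr
      have key : dist y y'' - ((⨅ q : A, (dist x' q + dist (f q) y'')) + 2 * ε) ≤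
          ⨅ p : A, (dist x' p + dist (f p) y) := by
        refine le_ciInf fun p => ?_
        have key2 : dist y y'' - (dist x' p + dist (f p) y) - 2 * ε ≤
            ⨅ q : A, (dist x' q + dist (f q) y'') := by
          refine le_ciInf fun q => ?_
          have t1 : dist y y'' ≤ dist y (f p) + dist (f p) (f q) + dist (f q) y'' := by
            have := dist_triangle y (f p) y''
            have := dist_triangle (f p) (f q) y''
            linarith
          have t3 := (abs_le.1 (hf p q)).1
          have t4 := dist_triangle p x' q
          have c1 := dist_comm (f p) y
          have c2 := dist_comm p x'
          linarith
        linarith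
      linarith
    · -- inr inr inl
      have key : (⨅ p : A, (dist x'' p + dist (f p) y)) - dist y y' ≤
          ⨅ p : A, (dist x'' p + dist (f p) y') := by
        refine le_ciInf fun p => ?_
        have h1 := phi_le f x'' y p
        have h2 := dist_triangle (f p) y' y
        have c1 := dist_comm y' y
        linarith
      linarith
    · exact dist_triangle _ _ _
  restr_left x x' := rfl
  restr_right y y' := rfl

theorem ghp_le_of_isometry [Nonempty A]
    [MeasurableSpace A] [OpensMeasurableSpace A] [MeasurableSpace B] [OpensMeasurableSpace B]
    (α : Measure A) (β : Measure B) [IsProbabilityMeasure α]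
    {f : A → B} {ε : ℝ} (hε : 0 < ε) (hfm : Measurable f) (hf : IsEpsIsometry ε f)
    (hprok : prokhorovDist (Measure.map f α) β ≤ ε) :
    ∃ δ₀ : A ⊕ B → A ⊕ B → ℝ, IsGlueMetric δ₀ ∧
      max (glueHausdorffDist δ₀) (glueProkhorovDist δ₀ α β) ≤ 2 * ε := by
  refine ⟨glueOfFun f ε, isGlueMetric_glueOfFun hε hf.1, max_le ?_ ?_⟩
  · -- Hausdorff part
    refine csInf_le ⟨0, fun x hx => hx.1.le⟩ ⟨by linarith, fun x => ⟨f x, ?_⟩, fun y => ?_⟩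
    · show (⨅ p : A, (dist x p + dist (f p) (f x))) + ε < 2 * ε
      have := phi_le f x (f x) x
      simp only [dist_self, add_zero] at this
      linarith
    · obtain ⟨x, hx⟩ := hf.2 y
      refine ⟨x, ?_⟩
      show (⨅ p : A, (dist x p + dist (f p) y)) + ε < 2 * ε
      have := phi_le f x y x
      simp only [dist_self, zero_add] at this
      rw [dist_comm] at hx
      linarith
  · -- Prokhorov part
    haveI : IsProbabilityMeasure (Measure.map f α) :=
      Measure.isProbabilityMeasure_map hfm.aemeasurable
    have hmem : ∀ τ > (0:ℝ), glueProkhorovDist (glueOfFun f ε) α β ≤ 2 * ε + τ := by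
      intro τ hτ
      refine csInf_le ⟨0, fun x hx => hx.1.le⟩ ⟨by linarith, ?_⟩
      intro C hC
      have hspec := prokhorovDist_spec (α := Measure.map f α) (β := β)
        (lt_of_le_of_lt hprok (by linarith : ε < ε + τ))
      set A' : Set A := Sum.inl ⁻¹' C with hA'
      have hsub1 : A' ⊆ f ⁻¹' (closure (f '' A')) := fun a ha =>
        subset_closure (mem_image_of_mem f ha)
      have hsub2 : Metric.thickening (ε + τ) (closure (f '' A')) ⊆
          Sum.inr ⁻¹' {a | ∃ b ∈ C, glueOfFun f ε a b < 2 * ε + τ} := by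
        intro y hy
        rw [Metric.thickening_closure, Metric.mem_thickening_iff] at hy
        obtain ⟨z, ⟨x, hxA, rfl⟩, hdist⟩ := hy
        refine ⟨inl x, hxA, ?_⟩
        show (⨅ p : A, (dist x p + dist (f p) y)) + ε < 2 * ε + τ
        have := phi_le f x y x
        simp only [dist_self, zero_add] at this
        rw [dist_comm] at hdist
        linarith
      calc α (Sum.inl ⁻¹' C) ≤ α (f ⁻¹' (closure (f '' A'))) := measure_mono hsub1
        _ = Measure.map f α (closure (f '' A')) :=
            (Measure.map_apply hfm isClosed_closure.measurableSet).symm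
        _ ≤ β (Metric.thickening (ε + τ) (closure (f '' A'))) + ENNReal.ofReal (ε + τ) :=
            hspec _ isClosed_closure
        _ ≤ β (Sum.inr ⁻¹' {a | ∃ b ∈ C, glueOfFun f ε a b < 2 * ε + τ})
              + ENNReal.ofReal (2 * ε + τ) :=
            add_le_add (measure_mono hsub2) (ENNReal.ofReal_le_ofReal (by linarith))
    exact le_of_forall_pos_le_add hmem

end LemC
section LemD

open Sum Metric MeasureTheory Set

theorem epsClose_exists {X Y : Type*} [MetricSpace X] [MetricSpace Y]
    [CompactSpace X] [CompactSpace Y] [Nonempty X] [Nonempty Y]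
    [MeasurableSpace X] [BorelSpace X] [MeasurableSpace Y] [BorelSpace Y]
    (μ : Measure X) (μ' : Measure Y)
    [IsProbabilityMeasure μ] [IsProbabilityMeasure μ'] :
    ∃ ε : ℝ, 0 < ε ∧ EpsClose ε μ μ' := by
  obtain ⟨x₀⟩ := ‹Nonempty X›
  obtain ⟨y₀⟩ := ‹Nonempty Y›
  set dX := Metric.diam (Set.univ : Set X)
  set dY := Metric.diam (Set.univ : Set Y)
  have hdX : 0 ≤ dX := Metric.diam_nonneg
  have hdY : 0 ≤ dY := Metric.diam_nonneg
  have hbX : ∀ x x' : X, dist x x' ≤ dX := fun x x' =>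
    Metric.dist_le_diam_of_mem isCompact_univ.isBounded (mem_univ _) (mem_univ _)
  have hbY : ∀ y y' : Y, dist y y' ≤ dY := fun y y' =>
    Metric.dist_le_diam_of_mem isCompact_univ.isBounded (mem_univ _) (mem_univ _)
  refine ⟨dX + dY + 2, by linarith, (fun _ => y₀), (fun _ => x₀),
    measurable_const, measurable_const, ⟨?_, ?_⟩, ⟨?_, ?_⟩, ?_, ?_⟩
  · intro x x'
    rw [dist_self, sub_zero, abs_of_nonneg dist_nonneg]
    linarith [hbX x x']
  · intro y
    exact ⟨x₀, by have := hbY y y₀; linarith⟩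
  · intro y y'
    rw [dist_self, sub_zero, abs_of_nonneg dist_nonneg]
    linarith [hbY y y']
  · intro x
    exact ⟨y₀, by have := hbX x x₀; linarith⟩
  · haveI : IsProbabilityMeasure (Measure.map (fun _ : X => y₀) μ) :=
      Measure.isProbabilityMeasure_map measurable_const.aemeasurable
    have := prokhorovDist_le_two (α := Measure.map (fun _ : X => y₀) μ) (β := μ')
    linarith
  · haveI : IsProbabilityMeasure (Measure.map (fun _ : Y => x₀) μ') :=
      Measure.isProbabilityMeasure_map measurable_const.aemeasurable
    have := prokhorovDist_le_two (α := Measure.map (fun _ : Y => x₀) μ') (β := μ)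
    linarith

end LemD

open Sum

/-- Comparison between `Δ_GHP` and the Gromov–Hausdorff–Prokhorov distance:
`(1/3) Δ_GHP ≤ d_GHP ≤ 2 Δ_GHP`. -/
theorem deltaGHP_le_ghpDist_le
    {X Y : Type*} [MetricSpace X] [MetricSpace Y]
    [CompactSpace X] [CompactSpace Y] [Nonempty X] [Nonempty Y]
    [MeasurableSpace X] [BorelSpace X] [MeasurableSpace Y] [BorelSpace Y]
    (μ : Measure X) (μ' : Measure Y)
    [IsProbabilityMeasure μ] [IsProbabilityMeasure μ'] :
    (1 / 3 : ℝ) * deltaGHP μ μ' ≤ ghpDist μ μ' ∧ ghpDist μ μ' ≤ 2 * deltaGHP μ μ' := by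
  obtain ⟨ε₀, hε₀pos, hε₀⟩ := epsClose_exists μ μ'
  have hΔne : Set.Nonempty {ε : ℝ | 0 < ε ∧ EpsClose ε μ μ'} := ⟨ε₀, hε₀pos, hε₀⟩
  have hΔbdd : BddBelow {ε : ℝ | 0 < ε ∧ EpsClose ε μ μ'} := ⟨0, fun x hx => hx.1.le⟩
  have hGbdd : BddBelow {r : ℝ | ∃ δ : X ⊕ Y → X ⊕ Y → ℝ, IsGlueMetric δ ∧
      r = max (glueHausdorffDist δ) (glueProkhorovDist δ μ μ')} := by
    refine ⟨0, ?_⟩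
    rintro r ⟨δ', _, rfl⟩
    exact le_trans (glueHausdorffDist_nonneg δ') (le_max_left _ _)
  have bridge : ∀ ε : ℝ, 0 < ε → EpsClose ε μ μ' → ghpDist μ μ' ≤ 2 * ε := by
    rintro ε hε ⟨f, g, hfm, hgm, hfi, hgi, hfp, hgp⟩
    obtain ⟨δ₀, hδ₀, hmax⟩ := ghp_le_of_isometry μ μ' hε hfm hfi hfp
    exact le_trans (csInf_le hGbdd ⟨δ₀, hδ₀, rfl⟩) hmax
  have hGne : Set.Nonempty {r : ℝ | ∃ δ : X ⊕ Y → X ⊕ Y → ℝ, IsGlueMetric δ ∧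
      r = max (glueHausdorffDist δ) (glueProkhorovDist δ μ μ')} := by
    obtain ⟨f, g, hfm, hgm, hfi, hgi, hfp, hgp⟩ := hε₀
    obtain ⟨δ₀, hδ₀, _⟩ := ghp_le_of_isometry μ μ' hε₀pos hfm hfi hfp
    exact ⟨_, δ₀, hδ₀, rfl⟩
  constructor
  · -- left inequality
    refine le_csInf hGne ?_
    rintro r ⟨δ, hδ, rfl⟩
    have hH0 : 0 ≤ glueHausdorffDist δ := glueHausdorffDist_nonneg δ
    have hP0 : 0 ≤ glueProkhorovDist δ μ μ' := glueProkhorovDist_nonneg δ μ μ'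
    set m := max (glueHausdorffDist δ) (glueProkhorovDist δ μ μ') with hm
    have hm0 : 0 ≤ m := le_trans hH0 (le_max_left _ _)
    have hkey : deltaGHP μ μ' ≤ 3 * m := by
      refine le_of_forall_pos_le_add fun τ hτ => ?_
      set ε : ℝ := m + τ/9 with hε
      set θ : ℝ := τ/9 with hθdef
      have hεp : 0 < ε := by simp only [hε]; linarith
      have hθp : 0 < θ := by simp only [hθdef]; linarith
      have hmlt : m < ε := by simp only [hε, hθdef]; linarith
      have hHlt : glueHausdorffDist δ < ε :=
        lt_of_le_of_lt (le_max_left (glueHausdorffDist δ) (glueProkhorovDist δ μ μ')) hmlt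
      have hPlt : glueProkhorovDist δ μ μ' < ε :=
        lt_of_le_of_lt (le_max_right (glueHausdorffDist δ) (glueProkhorovDist δ μ μ')) hmlt
      obtain ⟨h1, h2⟩ := glueHausdorffDist_spec hδ hHlt
      have h3 := glueProkhorovDist_spec hPlt
      obtain ⟨f, hfm, hfi, hfp⟩ :=
        exists_eps_isometry hδ μ μ' hεp hθp h1 h2 h3
      -- the flipped glue metric
      have hδ' := hδ.flip
      have h3' := prokhorov_reversal hδ hεp h3
      have h1' : ∀ y : Y, ∃ x : X,
          (fun a b : Y ⊕ X => δ a.swap b.swap) (inl y) (inr x) < ε := by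
        intro y
        obtain ⟨x, hx⟩ := h2 y
        refine ⟨x, ?_⟩
        show δ (inr y) (inl x) < ε
        rw [hδ.symm]; exact hx
      have h2' : ∀ x : X, ∃ y : Y,
          (fun a b : Y ⊕ X => δ a.swap b.swap) (inl y) (inr x) < ε := by
        intro x
        obtain ⟨y, hy⟩ := h1 x
        refine ⟨y, ?_⟩
        show δ (inr y) (inl x) < ε
        rw [hδ.symm]; exact hy
      have h3'' : ∀ C' : Set (Y ⊕ X),
          (∀ a ∉ C', ∃ η > 0, ∀ b ∈ C',
            η ≤ (fun a b : Y ⊕ X => δ a.swap b.swap) a b) →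
          μ' (Sum.inl ⁻¹' C') ≤
            μ (Sum.inr ⁻¹' {a | ∃ b ∈ C',
              (fun a b : Y ⊕ X => δ a.swap b.swap) a b < ε}) + ENNReal.ofReal ε := by
        intro C' hC'
        set C : Set (X ⊕ Y) := Sum.swap ⁻¹' C' with hCdef
        have hCclosed : ∀ a ∉ C, ∃ η > 0, ∀ b ∈ C, η ≤ δ a b := by
          intro a ha
          obtain ⟨η, hη, hb⟩ := hC' a.swap ha
          refine ⟨η, hη, fun b hb' => ?_⟩
          have := hb b.swap hb'
          simpa [Sum.swap_swap] using this
        have e1 : (Sum.inl ⁻¹' C' : Set Y) = Sum.inr ⁻¹' C := rfl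
        have e2 : (Sum.inr ⁻¹' {a | ∃ b ∈ C',
            (fun a b : Y ⊕ X => δ a.swap b.swap) a b < ε} : Set X) =
            Sum.inl ⁻¹' {a | ∃ b ∈ C, δ a b < ε} := by
          ext x
          simp only [Set.mem_preimage, Set.mem_setOf_eq]
          constructor
          · rintro ⟨b', hb', hlt⟩
            refine ⟨b'.swap, by simpa [hCdef, Sum.swap_swap] using hb', ?_⟩
            simpa using hlt
          · rintro ⟨b, hb, hlt⟩
            refine ⟨b.swap, hb, ?_⟩
            simpa [Sum.swap_swap] using hlt
        rw [e1, e2]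
        exact h3' C hCclosed
      obtain ⟨g, hgm, hgi, hgp⟩ :=
        exists_eps_isometry hδ' μ' μ hεp hθp h1' h2' h3''
      have hmem : (2*ε + 2*θ) ∈ {ε : ℝ | 0 < ε ∧ EpsClose ε μ μ'} :=
        ⟨by linarith, f, g, hfm, hgm, hfi, hgi, hfp, hgp⟩
      have hle := csInf_le hΔbdd hmem
      have : 2*ε + 2*θ ≤ 3 * m + τ := by
        simp only [hε, hθdef]; linarith
      exact le_trans hle this
    linarith
  · -- right inequality
    have : ghpDist μ μ' / 2 ≤ deltaGHP μ μ' := by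
      refine le_csInf hΔne fun ε hε => ?_
      have := bridge ε hε.1 hε.2
      linarith
    linarith
end
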